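/- Let u = (u₁,…,u₉) be a solution of the SEIR-like system on [0,S) with 0 < S ≤ T. (i) If u_i(0) = 0 for i ∈ {4,5}, then there exists ε > 0 such that u_i(t) > 0 for all t ∈ (0,ε). (ii) If u_i(0) = 0 for i ∈ {6,7}, then there exists ε > 0 such that u_i(t) ≥ 0 for all t ∈ (0,ε). -/
import Mathlib


open Set Filter MeasureTheory

section Aux

/-- Extract a small interval from an eventually statement in `𝓝[Ico 0 S] 0`. -/
lemma extract_Ico (S : ℝ) (hS : 0 < S) {P : ℝ → Prop}
    (h : ∀ᶠ t in nhdsWithin 0 (Ico 0 S), P t) :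
    ∃ δ > 0, δ ≤ S ∧ ∀ t ∈ Ico (0:ℝ) δ, P t := by
  rw [eventually_nhdsWithin_iff, Metric.eventually_nhds_iff] at h
  obtain ⟨ε, hε, hball⟩ := h
  refine ⟨min ε S, lt_min hε hS, min_le_right _ _, fun t ht => ?_⟩
  have ht0 : 0 ≤ t := ht.1
  have htε : t < ε := lt_of_lt_of_le ht.2 (min_le_left _ _)
  have htS : t < S := lt_of_lt_of_le ht.2 (min_le_right _ _)
  exact hball (by simpa [abs_of_nonneg ht0, sub_zero] using htε) ⟨ht0, htS⟩

lemma extract_Ioo (S : ℝ) (hS : 0 < S) {P : ℝ → Prop}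
    (h : ∀ᶠ t in nhdsWithin 0 (Ioo 0 S), P t) :
    ∃ δ > 0, δ ≤ S ∧ ∀ t ∈ Ioo (0:ℝ) δ, P t := by
  rw [eventually_nhdsWithin_iff, Metric.eventually_nhds_iff] at h
  obtain ⟨ε, hε, hball⟩ := h
  refine ⟨min ε S, lt_min hε hS, min_le_right _ _, fun t ht => ?_⟩
  have ht0 : 0 < t := ht.1
  have htε : t < ε := lt_of_lt_of_le ht.2 (min_le_left _ _)
  have htS : t < S := lt_of_lt_of_le ht.2 (min_le_right _ _)
  exact hball (by simpa [abs_of_nonneg ht0.le, sub_zero] using htε) ⟨ht0, htS⟩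

/-- If the one-sided derivative at `0` is positive and `f 0 = 0`, then `f > 0` just right of 0. -/
lemma pos_right_of_deriv_pos (S : ℝ) (hS : 0 < S) {f : ℝ → ℝ} {d : ℝ}
    (hf : HasDerivWithinAt f d (Ico 0 S) 0) (h0 : f 0 = 0) (hd : 0 < d) :
    ∃ δ > 0, δ ≤ S ∧ ∀ t ∈ Ioo (0:ℝ) δ, 0 < f t := by
  rw [hasDerivWithinAt_iff_tendsto_slope] at hf
  have hset : Ico 0 S \ {0} = Ioo 0 S := Ico_diff_left
  rw [hset] at hf
  have hev : ∀ᶠ t in nhdsWithin 0 (Ioo 0 S), 0 < slope f 0 t :=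
    hf.eventually (eventually_gt_nhds hd)
  obtain ⟨δ, hδ, hδS, hP⟩ := extract_Ioo S hS hev
  refine ⟨δ, hδ, hδS, fun t ht => ?_⟩
  have := hP t ht
  rw [slope_def_field] at this
  have ht0 : 0 < t := ht.1
  have : 0 < (f t - f 0) / (t - 0) := by
    simpa [div_eq_inv_mul] using this
  rw [h0, sub_zero, sub_zero] at this
  have := mul_pos this ht0
  rwa [div_mul_cancel₀ _ ht0.ne'] at this

/-- Barrier lemma: if `f 0 = 0` and `f' t > 0` whenever `f t < 0` (for `t ∈ (0,δ)`),
then `f ≥ 0` on `[0,δ)`. -/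
lemma nonneg_of_deriv_pos_on_neg (S δ : ℝ) (hδ : 0 < δ) (hδS : δ ≤ S)
    {f F : ℝ → ℝ}
    (hf : ∀ t ∈ Ico (0:ℝ) S, HasDerivWithinAt f (F t) (Ico 0 S) t)
    (h0 : f 0 = 0)
    (hF : ∀ t ∈ Ioo (0:ℝ) δ, f t < 0 → 0 < F t) :
    ∀ t ∈ Ico (0:ℝ) δ, 0 ≤ f t := by
  have hcont : ContinuousOn f (Ico 0 S) := fun t ht => (hf t ht).continuousWithinAt
  by_contra hcon
  push_neg at hcon
  obtain ⟨t₀, ht₀, hft₀⟩ := hcon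
  have ht₀S : t₀ < S := lt_of_lt_of_le ht₀.2 hδS
  have hsub : Icc (0:ℝ) t₀ ⊆ Ico 0 S := fun x hx => ⟨hx.1, lt_of_le_of_lt hx.2 ht₀S⟩
  have hcont' : ContinuousOn f (Icc 0 t₀) := hcont.mono hsub
  have ht₀0 : 0 < t₀ := by
    rcases lt_or_eq_of_le ht₀.1 with h | h
    · exact h
    · exfalso; rw [← h, h0] at hft₀; exact lt_irrefl 0 hft₀
  set A : Set ℝ := Icc 0 t₀ ∩ f ⁻¹' {0} with hA
  have hAne : A.Nonempty := ⟨0, ⟨le_refl 0, ht₀0.le⟩, by simpa using h0⟩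
  have hAclosed : IsClosed A := hcont'.preimage_isClosed_of_isClosed isClosed_Icc isClosed_singleton
  have hAcomp : IsCompact A := isCompact_Icc.of_isClosed_subset hAclosed inter_subset_left
  set s := sSup A with hs
  have hsA : s ∈ A := hAcomp.sSup_mem hAne
  have hfs : f s = 0 := hsA.2
  have hs0 : 0 ≤ s := hsA.1.1
  have hst₀ : s < t₀ := by
    rcases lt_or_eq_of_le hsA.1.2 with h | h
    · exact h
    · exfalso; rw [← h, hfs] at hft₀; exact lt_irrefl 0 hft₀
  -- all points in (s, t₀] are negative
  have hneg : ∀ t ∈ Ioc s t₀, f t < 0 := by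
    intro t ht
    by_contra hge
    push_neg at hge
    have htlt : t < t₀ := by
      rcases lt_or_eq_of_le ht.2 with h | h
      · exact h
      · exfalso; rw [h] at hge; exact absurd hft₀ (not_lt.mpr hge)
    have : (0:ℝ) ∈ Icc (f t₀) (f t) := ⟨hft₀.le, hge⟩
    have hIVT := intermediate_value_Icc' htlt.le (hcont'.mono (Icc_subset_Icc (hs0.trans ht.1.le) le_rfl)) this
    obtain ⟨z, hz, hfz⟩ := hIVT
    have hzA : z ∈ A := ⟨⟨(hs0.trans ht.1.le).trans hz.1, hz.2⟩, hfz⟩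
    have : z ≤ s := le_csSup hAcomp.bddAbove hzA
    have : s < z := lt_of_lt_of_le ht.1 hz.1
    linarith
  -- f is strictly monotone on [s, t₀]
  have hmono : StrictMonoOn f (Icc s t₀) := by
    apply strictMonoOn_of_deriv_pos (convex_Icc s t₀)
    · exact hcont'.mono (Icc_subset_Icc hs0 le_rfl)
    · intro x hx
      rw [interior_Icc] at hx
      have hx0 : 0 < x := lt_of_le_of_lt hs0 hx.1
      have hxS : x < S := lt_of_lt_of_le (hx.2.trans ht₀.2) hδS
      have hder : HasDerivAt f (F x) x :=
        (hf x ⟨hx0.le, hxS⟩).hasDerivAt (Ico_mem_nhds hx0 hxS)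
      rw [hder.deriv]
      exact hF x ⟨hx0, hx.2.trans ht₀.2⟩ (hneg x ⟨hx.1, hx.2.le⟩)
  have : f s < f t₀ := hmono ⟨le_rfl, hst₀.le⟩ ⟨hst₀.le, le_rfl⟩ hst₀
  rw [hfs] at this
  linarith

end Aux

/-- Right-hand side of the SEIR-like system. Components are indexed `0,…,8`,
corresponding to `x₁,…,x₉` (S, V, E, I_A, I_M, I_S, I_C, R, D). -/
noncomputable def seirRHS (a b c sigma p : ℝ) (beta nu gA gM gS gC aS aC dD : ℝ → ℝ)
    (t : ℝ) (x : Fin 9 → ℝ) : Fin 9 → ℝ :=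
  ![-(x 0) * beta t * (c * x 3 + x 4 + a * x 5 + b * x 6) - nu t * x 0,
    nu t * x 0,
    x 0 * beta t * (c * x 3 + x 4 + a * x 5 + b * x 6) - sigma * x 2,
    (1 - p) * sigma * x 2 - gA t * x 3,
    p * sigma * x 2 - (gM t + aS t) * x 4,
    aS t * x 4 - (gS t + aC t) * x 5,
    aC t * x 5 - (gC t + dD t) * x 6,
    gA t * x 3 + gM t * x 4 + gS t * x 5 + gC t * x 6,
    dD t * x 6]

/-- `u` is a (C¹) solution of the SEIR-like system on the set `J` with initial value `x₀`. -/
noncomputable def IsSEIRSolOn (a b c sigma p : ℝ) (beta nu gA gM gS gC aS aC dD : ℝ → ℝ)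
    (x₀ : Fin 9 → ℝ) (u : ℝ → Fin 9 → ℝ) (J : Set ℝ) : Prop :=
  u 0 = x₀ ∧
  ∀ i : Fin 9, ∀ t ∈ J,
    HasDerivWithinAt (fun s => u s i)
      (seirRHS a b c sigma p beta nu gA gM gS gC aS aC dD t (u t) i) J t

/-- (i) if `u_i(0) = 0` for `i ∈ {4,5}` (indices `3,4`), then `u_i > 0` on some
`(0,ε)`; (ii) if `u_i(0) = 0` for `i ∈ {6,7}` (indices `5,6`), then `u_i ≥ 0` on some `(0,ε)`. -/
theorem seir_initial_zero_becomes_nonneg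
    (T a b c sigma p : ℝ) (hT : 0 < T) (ha : 0 < a) (hb : 0 < b) (hc : 0 < c)
    (hsigma : 0 < sigma) (hp0 : 0 < p) (hp1 : p < 1)
    (beta nu gA gM gS gC aS aC dD : ℝ → ℝ)
    (hcont : ∀ f ∈ [beta, nu, gA, gM, gS, gC, aS, aC, dD], ContinuousOn f (Icc 0 T))
    (hpos : ∀ f ∈ [beta, nu, gA, gM, gS, gC, aS, aC, dD], ∀ t ∈ Icc (0:ℝ) T, 0 < f t)
    (x₀ : Fin 9 → ℝ) (hx₀ : ∀ i, 0 ≤ x₀ i) (hx₀1 : 0 < x₀ 0) (hx₀3 : 0 < x₀ 2)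
    (S : ℝ) (hS : 0 < S) (hST : S ≤ T)
    (u : ℝ → Fin 9 → ℝ)
    (hu : IsSEIRSolOn a b c sigma p beta nu gA gM gS gC aS aC dD x₀ u (Ico 0 S))
 :
    (∀ i ∈ ({3, 4} : Set (Fin 9)), u 0 i = 0 →
      ∃ ε > 0, ∀ t ∈ Ioo (0:ℝ) ε, 0 < u t i) ∧
    (∀ i ∈ ({5, 6} : Set (Fin 9)), u 0 i = 0 →
      ∃ ε > 0, ∀ t ∈ Ioo (0:ℝ) ε, 0 ≤ u t i) := by

  obtain ⟨hu0, hder⟩ := hu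
  have h0mem : (0:ℝ) ∈ Ico 0 S := ⟨le_rfl, hS⟩
  have hcontu : ∀ i : Fin 9, ContinuousOn (fun t => u t i) (Ico 0 S) :=
    fun i t ht => (hder i t ht).continuousWithinAt
  have h02 : u 0 2 = x₀ 2 := congrFun hu0 2
  have hgApos := hpos gA (by simp) 0 ⟨le_rfl, hT.le⟩
  have haSpos := fun t (ht : t ∈ Icc (0:ℝ) T) => hpos aS (by simp) t ht
  have haCpos := fun t (ht : t ∈ Icc (0:ℝ) T) => hpos aC (by simp) t ht
  have hgSpos := fun t (ht : t ∈ Icc (0:ℝ) T) => hpos gS (by simp) t ht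
  have hgCpos := fun t (ht : t ∈ Icc (0:ℝ) T) => hpos gC (by simp) t ht
  have hdDpos := fun t (ht : t ∈ Icc (0:ℝ) T) => hpos dD (by simp) t ht
  have hmemT : ∀ {t : ℝ}, 0 ≤ t → t < S → t ∈ Icc (0:ℝ) T :=
    fun h1 h2 => ⟨h1, (h2.trans_le hST).le⟩
  -- Part (i) for index 3
  have hpos3 : u 0 3 = 0 → ∃ δ > 0, δ ≤ S ∧ ∀ t ∈ Ioo (0:ℝ) δ, 0 < u t 3 := by
    intro h3
    have hd := hder 3 0 h0mem
    have heq : seirRHS a b c sigma p beta nu gA gM gS gC aS aC dD 0 (u 0) 3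
        = (1 - p) * sigma * u 0 2 - gA 0 * u 0 3 := rfl
    rw [heq, h02, h3, mul_zero, sub_zero] at hd
    exact pos_right_of_deriv_pos S hS hd h3
      (mul_pos (mul_pos (by linarith) hsigma) hx₀3)
  -- Part (i) for index 4
  have hpos4 : u 0 4 = 0 → ∃ δ > 0, δ ≤ S ∧ ∀ t ∈ Ioo (0:ℝ) δ, 0 < u t 4 := by
    intro h4
    have hd := hder 4 0 h0mem
    have heq : seirRHS a b c sigma p beta nu gA gM gS gC aS aC dD 0 (u 0) 4
        = p * sigma * u 0 2 - (gM 0 + aS 0) * u 0 4 := rfl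
    rw [heq, h02, h4, mul_zero, sub_zero] at hd
    exact pos_right_of_deriv_pos S hS hd h4 (mul_pos (mul_pos hp0 hsigma) hx₀3)
  -- Component 4 is nonnegative near 0, unconditionally
  have h4nn : ∃ δ > 0, δ ≤ S ∧ ∀ t ∈ Ico (0:ℝ) δ, 0 ≤ u t 4 := by
    rcases eq_or_lt_of_le (hx₀ 4) with h | h
    · have h4 : u 0 4 = 0 := by rw [hu0, ← h]
      obtain ⟨δ, hδ, hδS, hP⟩ := hpos4 h4
      refine ⟨δ, hδ, hδS, fun t ht => ?_⟩
      rcases eq_or_lt_of_le ht.1 with h' | h'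
      · rw [← h', h4]
      · exact (hP t ⟨h', ht.2⟩).le
    · have h4 : 0 < u 0 4 := by rw [hu0]; exact h
      have hev : ∀ᶠ t in nhdsWithin 0 (Ico 0 S), 0 < u t 4 :=
        (hcontu 4 0 h0mem).eventually (eventually_gt_nhds h4)
      obtain ⟨δ, hδ, hδS, hP⟩ := extract_Ico S hS hev
      exact ⟨δ, hδ, hδS, fun t ht => (hP t ht).le⟩
  -- Part (ii) core for index 5
  have h5nonneg : u 0 5 = 0 → ∃ δ > 0, δ ≤ S ∧ ∀ t ∈ Ico (0:ℝ) δ, 0 ≤ u t 5 := by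
    intro h5
    obtain ⟨δ, hδ, hδS, h4⟩ := h4nn
    refine ⟨δ, hδ, hδS, ?_⟩
    refine nonneg_of_deriv_pos_on_neg S δ hδ hδS
      (F := fun t => aS t * u t 4 - (gS t + aC t) * u t 5)
      (fun t ht => hder 5 t ht) h5 ?_
    intro t ht hneg
    have htT : t ∈ Icc (0:ℝ) T := hmemT ht.1.le (ht.2.trans_le hδS)
    have h4t : 0 ≤ u t 4 := h4 t ⟨ht.1.le, ht.2⟩
    have h1 : 0 ≤ aS t * u t 4 := mul_nonneg (haSpos t htT).le h4t
    have h2 : 0 < (gS t + aC t) * (-(u t 5)) :=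
      mul_pos (by linarith [hgSpos t htT, haCpos t htT]) (by linarith)
    show 0 < aS t * u t 4 - (gS t + aC t) * u t 5
    nlinarith
  -- Component 5 is nonnegative near 0, unconditionally
  have h5nn : ∃ δ > 0, δ ≤ S ∧ ∀ t ∈ Ico (0:ℝ) δ, 0 ≤ u t 5 := by
    rcases eq_or_lt_of_le (hx₀ 5) with h | h
    · exact h5nonneg (by rw [hu0, ← h])
    · have h5 : 0 < u 0 5 := by rw [hu0]; exact h
      have hev : ∀ᶠ t in nhdsWithin 0 (Ico 0 S), 0 < u t 5 :=
        (hcontu 5 0 h0mem).eventually (eventually_gt_nhds h5)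
      obtain ⟨δ, hδ, hδS, hP⟩ := extract_Ico S hS hev
      exact ⟨δ, hδ, hδS, fun t ht => (hP t ht).le⟩
  -- Part (ii) core for index 6
  have h6nonneg : u 0 6 = 0 → ∃ δ > 0, δ ≤ S ∧ ∀ t ∈ Ico (0:ℝ) δ, 0 ≤ u t 6 := by
    intro h6
    obtain ⟨δ, hδ, hδS, h5⟩ := h5nn
    refine ⟨δ, hδ, hδS, ?_⟩
    refine nonneg_of_deriv_pos_on_neg S δ hδ hδS
      (F := fun t => aC t * u t 5 - (gC t + dD t) * u t 6)
      (fun t ht => hder 6 t ht) h6 ?_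
    intro t ht hneg
    have htT : t ∈ Icc (0:ℝ) T := hmemT ht.1.le (ht.2.trans_le hδS)
    have h5t : 0 ≤ u t 5 := h5 t ⟨ht.1.le, ht.2⟩
    have h1 : 0 ≤ aC t * u t 5 := mul_nonneg (haCpos t htT).le h5t
    have h2 : 0 < (gC t + dD t) * (-(u t 6)) :=
      mul_pos (by linarith [hgCpos t htT, hdDpos t htT]) (by linarith)
    show 0 < aC t * u t 5 - (gC t + dD t) * u t 6
    nlinarith
  constructor
  · intro i hi hi0
    have : i = 3 ∨ i = 4 := by simpa using hi
    rcases this with rfl | rfl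
    · obtain ⟨δ, hδ, _, hP⟩ := hpos3 hi0
      exact ⟨δ, hδ, hP⟩
    · obtain ⟨δ, hδ, _, hP⟩ := hpos4 hi0
      exact ⟨δ, hδ, hP⟩
  · intro i hi hi0
    have : i = 5 ∨ i = 6 := by simpa using hi
    rcases this with rfl | rfl
    · obtain ⟨δ, hδ, _, hP⟩ := h5nonneg hi0
      exact ⟨δ, hδ, fun t ht => hP t ⟨ht.1.le, ht.2⟩⟩
    · obtain ⟨δ, hδ, _, hP⟩ := h6nonneg hi0
      exact ⟨δ, hδ, fun t ht => hP t ⟨ht.1.le, ht.2⟩⟩
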